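/- Let R be an additive relation between abelian groups G and H, and let S, T be additive relations between H and an abelian group K. Then (S + T) ∘ R ⊆ (S ∘ R) + (T ∘ R). If moreover R, S and T are quasi-homomorphisms, then (S + T) ∘ R and (S ∘ R) + (T ∘ R) are equivalent: there are a subgroup G₁ of finite index in G and a finite subgroup F ≤ K such that (((S+T)∘R) ∩ (G₁ × K)) + (G₁ × F) = (((S∘R)+(T∘R)) ∩ (G₁ × K)) + (G₁ × F). -/

import Mathlib

namespace QH

variable {G H K : Type*} [AddCommGroup G] [AddCommGroup H] [AddCommGroup K]

def dom (R : AddSubgroup (G × H)) : AddSubgroup G := R.map (AddMonoidHom.fst G H)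

def img (R : AddSubgroup (G × H)) : AddSubgroup H := R.map (AddMonoidHom.snd G H)

def ker (R : AddSubgroup (G × H)) : AddSubgroup G := R.comap (AddMonoidHom.inl G H)

def coker (R : AddSubgroup (G × H)) : AddSubgroup H := R.comap (AddMonoidHom.inr G H)

/-- The sum of two additive relations: `R + R' = {(a, b+b') : (a,b) ∈ R, (a,b') ∈ R'}`. -/
def relAdd (R R' : AddSubgroup (G × H)) : AddSubgroup (G × H) where
  carrier := {p | ∃ b b', (p.1, b) ∈ R ∧ (p.1, b') ∈ R' ∧ p.2 = b + b'}
  zero_mem' := ⟨0, 0, R.zero_mem, R'.zero_mem, by simp⟩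
  add_mem' := by
    rintro ⟨a, c⟩ ⟨a', c'⟩ ⟨b, b', hb, hb', rfl⟩ ⟨d, d', hd, hd', rfl⟩
    exact ⟨b + d, b' + d', R.add_mem hb hd, R'.add_mem hb' hd', by simp only [Prod.snd_add]; abel⟩
  neg_mem' := by
    rintro ⟨a, c⟩ ⟨b, b', hb, hb', rfl⟩
    exact ⟨-b, -b', R.neg_mem hb, R'.neg_mem hb', by simp only [Prod.snd_neg]; abel⟩

/-- The composition of additive relations. -/
def relComp (S : AddSubgroup (H × K)) (R : AddSubgroup (G × H)) : AddSubgroup (G × K) where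
  carrier := {p | ∃ b, (p.1, b) ∈ R ∧ (b, p.2) ∈ S}
  zero_mem' := ⟨0, R.zero_mem, S.zero_mem⟩
  add_mem' := by
    rintro ⟨a, c⟩ ⟨a', c'⟩ ⟨b, hb, hb'⟩ ⟨d, hd, hd'⟩
    exact ⟨b + d, R.add_mem hb hd, S.add_mem hb' hd'⟩
  neg_mem' := by
    rintro ⟨a, c⟩ ⟨b, hb, hb'⟩
    exact ⟨-b, R.neg_mem hb, S.neg_mem hb'⟩

/-- The inverse of an additive relation: `R⁻¹ = {(h,g) : (g,h) ∈ R}`. -/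
def relInv (R : AddSubgroup (G × H)) : AddSubgroup (H × G) :=
  R.map ((AddMonoidHom.snd G H).prod (AddMonoidHom.fst G H))

/-- The diagonal relation `id_D = {(d,d) : d ∈ D}` of a subgroup `D ≤ A`. -/
def relId {A : Type*} [AddCommGroup A] (D : AddSubgroup A) : AddSubgroup (A × A) :=
  D.map ((AddMonoidHom.id A).prod (AddMonoidHom.id A))


def IsQuasiHom (R : AddSubgroup (G × H)) : Prop :=
  (dom R).FiniteIndex ∧ ((coker R : Set H)).Finite

/-- Two additive relations `R, R' ≤ G × H` are equivalent if there are a finite-index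
subgroup `G₁ ≤ G` and a finite subgroup `F ≤ H` with
`(R ∩ (G₁ × H)) + (G₁ × F) = (R' ∩ (G₁ × H)) + (G₁ × F)`. -/
def relEquiv (R R' : AddSubgroup (G × H)) : Prop :=
  ∃ (G₁ : AddSubgroup G) (F : AddSubgroup H), G₁.FiniteIndex ∧ ((F : Set H)).Finite ∧
    relAdd (R ⊓ G₁.prod ⊤) (G₁.prod F) = relAdd (R' ⊓ G₁.prod ⊤) (G₁.prod F)

open Pointwise

lemma mem_dom {R : AddSubgroup (G × H)} {a : G} : a ∈ dom R ↔ ∃ b, (a, b) ∈ R := by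
  constructor
  · rintro ⟨⟨x, y⟩, hxy, rfl⟩
    exact ⟨y, hxy⟩
  · rintro ⟨b, hb⟩
    exact ⟨(a, b), hb, rfl⟩

lemma mem_img {R : AddSubgroup (G × H)} {b : H} : b ∈ img R ↔ ∃ a, (a, b) ∈ R := by
  constructor
  · rintro ⟨⟨x, y⟩, hxy, rfl⟩
    exact ⟨x, hxy⟩
  · rintro ⟨a, ha⟩
    exact ⟨(a, b), ha, rfl⟩

lemma mem_coker {R : AddSubgroup (G × H)} {b : H} : b ∈ coker R ↔ ((0 : G), b) ∈ R :=
  Iff.rfl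

lemma dom_mono {R R' : AddSubgroup (G × H)} (h : R ≤ R') : dom R ≤ dom R' :=
  AddSubgroup.map_mono h

/-- Each fiber of an additive relation with finite cokernel is finite. -/
lemma fiber_finite (S : AddSubgroup (H × K)) (hS : ((coker S : Set K)).Finite) (h : H) :
    {k : K | (h, k) ∈ S}.Finite := by
  rcases Set.eq_empty_or_nonempty {k : K | (h, k) ∈ S} with he | ⟨k₀, hk₀⟩
  · simp [he]
  · apply Set.Finite.subset (hS.image (fun x => k₀ + x))
    intro k hk
    refine ⟨k - k₀, ?_, by simp⟩
    have : ((h, k) - (h, k₀)) ∈ S := S.sub_mem hk hk₀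
    simpa [mem_coker, Prod.ext_iff] using this

/-- The image of a finite subgroup under a relation with finite cokernel is finite. -/
lemma img_inf_finite (S : AddSubgroup (H × K)) (C : AddSubgroup H)
    (hC : ((C : Set H)).Finite) (hS : ((coker S : Set K)).Finite) :
    ((img (S ⊓ C.prod ⊤) : Set K)).Finite := by
  refine Set.Finite.subset (hC.biUnion (fun h _ => fiber_finite S hS h)) ?_
  intro k hk
  rw [SetLike.mem_coe, mem_img] at hk
  obtain ⟨h, hS', hmem⟩ := hk
  exact Set.mem_biUnion hmem.1 hS'

/-- Preimage of a finite-index subgroup under a quasi-homomorphism has finite index. -/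
lemma dom_inf_finiteIndex (R : AddSubgroup (G × H)) (hR : IsQuasiHom R)
    (H₁ : AddSubgroup H) (hH₁ : H₁.FiniteIndex) :
    (dom (R ⊓ (⊤ : AddSubgroup G).prod H₁)).FiniteIndex := by
  classical
  set H₂ : AddSubgroup H := H₁ ⊔ coker R with hH₂def
  have hH₁le : H₁ ≤ H₂ := le_sup_left
  have hCle : coker R ≤ H₂ := le_sup_right
  have hH₂ : H₂.index ≠ 0 := by
    intro h0
    exact hH₁.index_ne_zero (by
      have := AddSubgroup.index_dvd_of_le hH₁le
      rw [h0] at this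
      exact Nat.eq_zero_of_zero_dvd this)
  -- the two domains coincide
  have heq : dom (R ⊓ (⊤ : AddSubgroup G).prod H₁) = dom (R ⊓ (⊤ : AddSubgroup G).prod H₂) := by
    apply le_antisymm
    · exact dom_mono (inf_le_inf_left _ (AddSubgroup.prod_mono le_rfl hH₁le))
    · intro a ha
      rw [mem_dom] at ha
      obtain ⟨b, hbR, hb2⟩ := ha
      obtain ⟨b₁, hb₁, b₂, hb₂, hbsum⟩ := AddSubgroup.mem_sup.mp hb2.2
      rw [mem_dom]
      have hsub : ((a, b) - ((0 : G), b₂)) ∈ R := R.sub_mem hbR hb₂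
      have hab : (a, b) - ((0 : G), b₂) = (a, b₁) := by
        rw [Prod.ext_iff]
        refine ⟨by simp, ?_⟩
        show b - b₂ = b₁
        have hbsum' : b₁ + b₂ = b := hbsum
        rw [← hbsum']; abel
      rw [hab] at hsub
      exact ⟨b₁, hsub, trivial, hb₁⟩
  rw [heq]
  set D : AddSubgroup G := dom R with hDdef
  have hDidx : D.index ≠ 0 := hR.1.index_ne_zero
  -- choose images
  have hch : ∀ a : D, ∃ b : H, ((a : G), b) ∈ R := fun a => mem_dom.mp a.2
  choose bf hbf using hch
  have key : ∀ a a' : D, bf (a + a') - (bf a + bf a') ∈ coker R := by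
    intro a a'
    have h2 : (((a : G) + (a' : G)), bf a + bf a') ∈ R := by
      have := R.add_mem (hbf a) (hbf a')
      simpa using this
    have h1 : (((a : G) + (a' : G)), bf (a + a')) ∈ R := by
      have := hbf (a + a')
      simpa using this
    have := R.sub_mem h1 h2
    rw [mem_coker]
    simpa [Prod.ext_iff] using this
  let f : D →+ H ⧸ H₂ := AddMonoidHom.mk' (fun a => QuotientAddGroup.mk (bf a)) (by
    intro a a'
    change _ = QuotientAddGroup.mk _ + QuotientAddGroup.mk _
    rw [← QuotientAddGroup.mk_add, QuotientAddGroup.eq_iff_sub_mem]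
    exact hCle (key a a'))
  -- range f is finite
  let g : (img R : AddSubgroup H) →+ H ⧸ H₂ := (QuotientAddGroup.mk' H₂).comp (img R).subtype
  have hgker : g.ker = H₂.addSubgroupOf (img R) := by
    ext x
    simp only [AddMonoidHom.mem_ker, g, AddMonoidHom.comp_apply, AddSubgroup.coe_subtype,
      QuotientAddGroup.mk'_apply, QuotientAddGroup.eq_zero_iff]
    rfl
  have hgrel : Nat.card (Set.range g) = H₂.relIndex (img R) := by
    have h1 : g.ker.index = Nat.card (Set.range g) := AddSubgroup.index_ker g
    rw [← h1, hgker]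
    rfl
  have hrelne : H₂.relIndex (img R) ≠ 0 := by
    intro h0
    have := AddSubgroup.relIndex_dvd_index_of_normal H₂ (img R)
    rw [h0] at this
    exact hH₂ (Nat.eq_zero_of_zero_dvd this)
  have hgfin : (Set.range g).Finite := by
    rw [← Set.not_infinite]
    intro hinf
    have : Nat.card (Set.range g) = 0 := @Nat.card_eq_zero_of_infinite _ hinf.to_subtype
    rw [hgrel] at this
    exact hrelne this
  have hsub : Set.range f ⊆ Set.range g := by
    rintro _ ⟨a, rfl⟩
    exact ⟨⟨bf a, mem_img.mpr ⟨(a : G), hbf a⟩⟩, rfl⟩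
  have hffin : (Set.range f).Finite := hgfin.subset hsub
  have hfker : f.ker.index ≠ 0 := by
    rw [AddSubgroup.index_ker]
    have : Finite (Set.range f) := hffin.to_subtype
    exact Nat.card_ne_zero.mpr ⟨⟨f 0, 0, rfl⟩, this⟩
  have hkereq : f.ker = (dom (R ⊓ (⊤ : AddSubgroup G).prod H₂)).addSubgroupOf D := by
    ext a
    simp only [AddMonoidHom.mem_ker, AddSubgroup.mem_addSubgroupOf]
    constructor
    · intro h
      have hbH₂ : bf a ∈ H₂ := by
        have h' : QuotientAddGroup.mk (bf a) = (0 : H ⧸ H₂) := h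
        rwa [QuotientAddGroup.eq_zero_iff] at h'
      exact mem_dom.mpr ⟨bf a, hbf a, trivial, hbH₂⟩
    · intro h
      obtain ⟨b', hb'R, hb'2⟩ := mem_dom.mp h
      have hdiff : bf a - b' ∈ coker R := by
        have := R.sub_mem (hbf a) hb'R
        rw [mem_coker]
        simpa [Prod.ext_iff] using this
      have hbH₂ : bf a ∈ H₂ := by
        have := H₂.add_mem (hCle hdiff) hb'2.2
        simpa using this
      show QuotientAddGroup.mk (bf a) = (0 : H ⧸ H₂)
      rwa [QuotientAddGroup.eq_zero_iff]
  have hle : dom (R ⊓ (⊤ : AddSubgroup G).prod H₂) ≤ D := dom_mono inf_le_left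
  have hrel2 : (dom (R ⊓ (⊤ : AddSubgroup G).prod H₂)).relIndex D ≠ 0 := by
    have h' : (dom (R ⊓ (⊤ : AddSubgroup G).prod H₂)).relIndex D
        = ((dom (R ⊓ (⊤ : AddSubgroup G).prod H₂)).addSubgroupOf D).index := rfl
    rw [h', ← hkereq]
    exact hfker
  refine ⟨?_⟩
  rw [← AddSubgroup.relIndex_mul_index hle]
  exact mul_ne_zero hrel2 hDidx

/-- `(S + T) ∘ R ⊆ (S ∘ R) + (T ∘ R)`, and if `R`, `S`, `T` are
quasi-homomorphisms then the two sides are equivalent. -/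
theorem relComp_relAdd (R : AddSubgroup (G × H)) (S T : AddSubgroup (H × K)) :
    relComp (relAdd S T) R ≤ relAdd (relComp S R) (relComp T R) ∧
      (IsQuasiHom R → IsQuasiHom S → IsQuasiHom T →
        relEquiv (relComp (relAdd S T) R) (relAdd (relComp S R) (relComp T R))) := by
  have hLM : relComp (relAdd S T) R ≤ relAdd (relComp S R) (relComp T R) := by
    rintro ⟨a, c⟩ ⟨b, hbR, c₁, c₂, hc₁, hc₂, rfl⟩
    exact ⟨c₁, c₂, ⟨b, hbR, hc₁⟩, ⟨b, hbR, hc₂⟩, rfl⟩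
  refine ⟨hLM, ?_⟩
  intro hR hS hT
  haveI := hS.1
  haveI := hT.1
  set H₁ : AddSubgroup H := dom S ⊓ dom T with hH₁def
  have hH₁ : H₁.FiniteIndex := inferInstance
  set G₁ : AddSubgroup G := dom (R ⊓ (⊤ : AddSubgroup G).prod H₁) with hG₁def
  have hG₁ : G₁.FiniteIndex := dom_inf_finiteIndex R hR H₁ hH₁
  set FS : AddSubgroup K := img (S ⊓ (coker R).prod ⊤) with hFSdef
  set FT : AddSubgroup K := img (T ⊓ (coker R).prod ⊤) with hFTdef
  have hFS : ((FS : Set K)).Finite := img_inf_finite S (coker R) hR.2 hS.2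
  have hFT : ((FT : Set K)).Finite := img_inf_finite T (coker R) hR.2 hT.2
  set F : AddSubgroup K := FS ⊔ FT with hFdef
  have hF : ((F : Set K)).Finite := by
    have hsub : (F : Set K) ⊆ (FS : Set K) + (FT : Set K) := by
      intro x hx
      obtain ⟨y, hy, z, hz, rfl⟩ := AddSubgroup.mem_sup.mp hx
      exact Set.add_mem_add hy hz
    exact (hFS.add hFT).subset hsub
  refine ⟨G₁, F, hG₁, hF, ?_⟩
  apply le_antisymm
  · rintro ⟨a, x⟩ ⟨c, f, ⟨hcL, hcP⟩, hf, rfl⟩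
    exact ⟨c, f, ⟨hLM hcL, hcP⟩, hf, rfl⟩
  · rintro ⟨a, x⟩ ⟨c, f, ⟨hcM, hcP⟩, hfP, rfl⟩
    have haG₁ : a ∈ G₁ := hcP.1
    have hfF : f ∈ F := hfP.2
    obtain ⟨c₁, c₂, ⟨b, hbR, hbc₁⟩, ⟨b', hb'R, hb'c₂⟩, rfl⟩ := hcM
    obtain ⟨b₀, hb₀R, hb₀P⟩ := mem_dom.mp haG₁
    obtain ⟨d₁, hd₁⟩ := mem_dom.mp hb₀P.2.1
    obtain ⟨d₂, hd₂⟩ := mem_dom.mp hb₀P.2.2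
    have hcL : (a, d₁ + d₂) ∈ relComp (relAdd S T) R := ⟨b₀, hb₀R, d₁, d₂, hd₁, hd₂, rfl⟩
    have h1 : c₁ - d₁ ∈ FS := by
      apply mem_img.mpr
      refine ⟨b - b₀, ⟨?_, ?_, trivial⟩⟩
      · have := S.sub_mem hbc₁ hd₁
        simpa using this
      · show b - b₀ ∈ coker R
        rw [mem_coker]
        have := R.sub_mem hbR hb₀R
        simpa [Prod.ext_iff] using this
    have h2 : c₂ - d₂ ∈ FT := by
      apply mem_img.mpr
      refine ⟨b' - b₀, ⟨?_, ?_, trivial⟩⟩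
      · have := T.sub_mem hb'c₂ hd₂
        simpa using this
      · show b' - b₀ ∈ coker R
        rw [mem_coker]
        have := R.sub_mem hb'R hb₀R
        simpa [Prod.ext_iff] using this
    refine ⟨d₁ + d₂, f + (c₁ - d₁) + (c₂ - d₂), ⟨hcL, haG₁, trivial⟩, ⟨haG₁, ?_⟩, ?_⟩
    · refine F.add_mem (F.add_mem hfF ?_) ?_
      · exact (le_sup_left : FS ≤ F) h1
      · exact (le_sup_right : FT ≤ F) h2
    · show c₁ + c₂ + f = d₁ + d₂ + (f + (c₁ - d₁) + (c₂ - d₂))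
      abel

end QH
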